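/- Among all probability densities $q'$ equivalent to $p$ satisfying the linear constraint $\mathbb{E}_{q'}[dX] = 0$, the density $q = wp$ with $w = e^{-\lambda a^*\cdot dX}/\mathbb{E}_p[e^{-\lambda a^*\cdot dX}]$ (where $a^*$ is the exponential-utility optimizer) satisfies $D_{KL}(q\|p) \le D_{KL}(q'\|p)$. -/

import Mathlib

open MeasureTheory
open scoped RealInnerProductSpace

/-- A bounded measurable real function is integrable w.r.t. a probability measure. -/
private lemma bdd_int {Ω : Type*} [MeasurableSpace Ω] (P : Measure Ω) [IsProbabilityMeasure P]
    {f : Ω → ℝ} (hm : Measurable f) {C : ℝ} (h : ∀ ω, |f ω| ≤ C) : Integrable f P :=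
  ⟨hm.aestronglyMeasurable,
    HasFiniteIntegral.of_bounded (C := C)
      (Filter.Eventually.of_forall (fun ω => by simpa [Real.norm_eq_abs] using h ω))⟩

/-- First-order condition: if `t = 1` globally minimizes `t ↦ ∫ exp (-λ t s)`, then
`∫ s exp (-λ s) = 0`. -/
private lemma foc {Ω : Type*} [MeasurableSpace Ω] (P : Measure Ω) [IsProbabilityMeasure P]
    (lam : ℝ) (hlam : 0 < lam) (s : Ω → ℝ) (hs : Measurable s) (M : ℝ) (hM0 : 0 ≤ M)
    (hsM : ∀ ω, |s ω| ≤ M)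
    (hmin : ∀ t : ℝ, ∫ ω, Real.exp (-lam * (1 * s ω)) ∂P ≤
      ∫ ω, Real.exp (-lam * (t * s ω)) ∂P) :
    ∫ ω, s ω * Real.exp (-lam * s ω) ∂P = 0 := by
  have hkey : ∀ (t : ℝ) (ω : Ω), -lam * (t * s ω) ≤ lam * (|t| * M) := by
    intro t ω
    have h1 : -(t * s ω) ≤ |t * s ω| := neg_le_abs _
    have h2 : |t * s ω| = |t| * |s ω| := abs_mul _ _
    have h3 : |t| * |s ω| ≤ |t| * M := mul_le_mul_of_nonneg_left (hsM ω) (abs_nonneg t)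
    calc -lam * (t * s ω) = lam * (-(t * s ω)) := by ring
      _ ≤ lam * (|t| * M) := mul_le_mul_of_nonneg_left (by linarith [h2 ▸ h1]) hlam.le
  have hmeas_exp : ∀ t : ℝ, Measurable (fun ω => Real.exp (-lam * (t * s ω))) :=
    fun t => ((hs.const_mul t).const_mul (-lam)).exp
  have hint_exp : ∀ t : ℝ, Integrable (fun ω => Real.exp (-lam * (t * s ω))) P := by
    intro t
    refine bdd_int P (hmeas_exp t) (C := Real.exp (lam * (|t| * M))) (fun ω => ?_)
    rw [abs_of_pos (Real.exp_pos _)]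
    exact Real.exp_le_exp.2 (hkey t ω)
  have hF_meas : ∀ᶠ t in nhds (1 : ℝ),
      AEStronglyMeasurable (fun ω => Real.exp (-lam * (t * s ω))) P :=
    Filter.Eventually.of_forall fun t => (hmeas_exp t).aestronglyMeasurable
  have hF'_meas :
      AEStronglyMeasurable (fun ω => (-lam * s ω) * Real.exp (-lam * (1 * s ω))) P :=
    ((hs.const_mul (-lam)).mul (hmeas_exp 1)).aestronglyMeasurable
  have h_bound : ∀ᵐ ω ∂P, ∀ t ∈ Metric.ball (1 : ℝ) 1,
      ‖(-lam * s ω) * Real.exp (-lam * (t * s ω))‖ ≤ (lam * M) * Real.exp (lam * (2 * M)) := by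
    refine ae_of_all _ fun ω t ht => ?_
    have ht2 : |t| ≤ 2 := by
      rw [Metric.mem_ball, Real.dist_eq] at ht
      have := abs_lt.mp ht
      rw [abs_le]; constructor <;> linarith
    have hb1 : lam * |s ω| ≤ lam * M := mul_le_mul_of_nonneg_left (hsM ω) hlam.le
    have hb2 : Real.exp (-lam * (t * s ω)) ≤ Real.exp (lam * (2 * M)) := by
      refine Real.exp_le_exp.2 ((hkey t ω).trans ?_)
      have : |t| * M ≤ 2 * M := mul_le_mul_of_nonneg_right ht2 hM0
      exact mul_le_mul_of_nonneg_left this hlam.le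
    rw [Real.norm_eq_abs, abs_mul, abs_of_pos (Real.exp_pos _), abs_mul, abs_neg,
      abs_of_pos hlam]
    exact mul_le_mul hb1 hb2 (Real.exp_pos _).le (by positivity)
  have h_diff : ∀ᵐ ω ∂P, ∀ t ∈ Metric.ball (1 : ℝ) 1,
      HasDerivAt (fun r => Real.exp (-lam * (r * s ω)))
        ((-lam * s ω) * Real.exp (-lam * (t * s ω))) t := by
    refine ae_of_all _ fun ω t _ => ?_
    have h0 : HasDerivAt (fun r : ℝ => (-lam * s ω) * r) (-lam * s ω) t := by
      simpa using (hasDerivAt_id t).const_mul (-lam * s ω)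
    have h1 := h0.exp
    have heq : (fun r : ℝ => Real.exp ((-lam * s ω) * r)) =
        fun r => Real.exp (-lam * (r * s ω)) := by
      funext r; congr 1; ring
    rw [heq] at h1
    convert h1 using 1
    rw [show (-lam * s ω) * t = -lam * (t * s ω) from by ring, mul_comm]
  obtain ⟨-, hderiv⟩ :=
    hasDerivAt_integral_of_dominated_loc_of_deriv_le (μ := P)
      (F := fun t ω => Real.exp (-lam * (t * s ω)))
      (F' := fun t ω => (-lam * s ω) * Real.exp (-lam * (t * s ω)))
      (x₀ := 1) (bound := fun _ => (lam * M) * Real.exp (lam * (2 * M)))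
      (Metric.ball_mem_nhds 1 one_pos) hF_meas (hint_exp 1) hF'_meas h_bound (integrable_const _) h_diff
  have hlocmin : IsLocalMin (fun t => ∫ ω, Real.exp (-lam * (t * s ω)) ∂P) 1 :=
    Filter.Eventually.of_forall hmin
  have hzero : ∫ ω, (-lam * s ω) * Real.exp (-lam * (1 * s ω)) ∂P = 0 :=
    hlocmin.hasDerivAt_eq_zero hderiv
  have he : ∀ ω, (-lam * s ω) * Real.exp (-lam * (1 * s ω)) =
      -lam * (s ω * Real.exp (-lam * s ω)) := by
    intro ω; rw [one_mul]; ring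
  simp_rw [he] at hzero
  rw [integral_const_mul] at hzero
  exact (mul_eq_zero.mp hzero).resolve_left (neg_ne_zero.2 hlam.ne')

/-- Minimal entropy martingale measure in one period: among all positive densities
`q'` (w.r.t. the physical measure `P`) satisfying the martingale constraint
`E_{q'}[dX] = 0`, the exponentially tilted density
`w = exp (-λ ⟪a*, dX⟫) / E_P[exp (-λ ⟪a*, dX⟫)]`, with `a*` the exponential-utility
optimizer, minimizes the relative entropy: `D_KL(q ‖ p) ≤ D_KL(q' ‖ p)`. -/
theorem stmt_11 {Ω : Type*} [MeasurableSpace Ω] (P : Measure Ω) [IsProbabilityMeasure P]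
    {d : ℕ} (dX : Ω → EuclideanSpace ℝ (Fin d)) (hdX_meas : Measurable dX)
    (hdX_bdd : ∃ C : ℝ, ∀ ω, ‖dX ω‖ ≤ C)
    (lam : ℝ) (hlam : 0 < lam)
    (u : ℝ → ℝ) (hu : u = fun x => (1 - Real.exp (-lam * x)) / lam)
    (astar : EuclideanSpace ℝ (Fin d))
    -- `a*` is an (interior) optimum of the expected exponential utility:
    (hmax : ∀ a : EuclideanSpace ℝ (Fin d),
      ∫ ω, u ⟪a, dX ω⟫ ∂P ≤ ∫ ω, u ⟪astar, dX ω⟫ ∂P)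
    (Z : ℝ) (hZ : Z = ∫ ω, Real.exp (-lam * ⟪astar, dX ω⟫) ∂P)
    (w : Ω → ℝ) (hw : w = fun ω => Real.exp (-lam * ⟪astar, dX ω⟫) / Z) :
    ∀ q' : Ω → ℝ, Measurable q' → (∀ ω, 0 < q' ω) →
      (∫ ω, q' ω ∂P = 1) →
      (∫ ω, q' ω • dX ω ∂P = 0) →
      Integrable (fun ω => q' ω * Real.log (q' ω)) P →
      ∫ ω, w ω * Real.log (w ω) ∂P ≤ ∫ ω, q' ω * Real.log (q' ω) ∂P := by
  intro q' hq'_meas hq'_pos hq'_int1 hq'_mart hq'_ent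
  obtain ⟨C, hC⟩ := hdX_bdd
  -- the scalar process `s = ⟪a*, dX⟫`
  have hs_meas : Measurable (fun ω => ⟪astar, dX ω⟫) := Measurable.inner measurable_const hdX_meas
  have hne : Nonempty Ω := by
    by_contra h
    rw [not_nonempty_iff] at h
    have h1 : P Set.univ = 1 := measure_univ
    simp [Set.univ_eq_empty_iff.2 h] at h1
  set M : ℝ := ‖astar‖ * C with hM_def
  have hsM : ∀ ω, |⟪astar, dX ω⟫| ≤ M := fun ω =>
    (abs_real_inner_le_norm _ _).trans (mul_le_mul_of_nonneg_left (hC ω) (norm_nonneg astar))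
  have hM0 : 0 ≤ M := le_trans (abs_nonneg _) (hsM (Classical.arbitrary Ω))
  -- integrability helpers
  have hmeas_exp : ∀ t : ℝ, Measurable (fun ω => Real.exp (-lam * (t * ⟪astar, dX ω⟫))) :=
    fun t => ((hs_meas.const_mul t).const_mul (-lam)).exp
  have hkey : ∀ (t : ℝ) (ω : Ω), -lam * (t * ⟪astar, dX ω⟫) ≤ lam * (|t| * M) := by
    intro t ω
    have h1 : -(t * ⟪astar, dX ω⟫) ≤ |t * ⟪astar, dX ω⟫| := neg_le_abs _
    have h2 : |t * ⟪astar, dX ω⟫| = |t| * |⟪astar, dX ω⟫| := abs_mul _ _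
    have h3 : |t| * |⟪astar, dX ω⟫| ≤ |t| * M := mul_le_mul_of_nonneg_left (hsM ω) (abs_nonneg t)
    calc -lam * (t * ⟪astar, dX ω⟫) = lam * (-(t * ⟪astar, dX ω⟫)) := by ring
      _ ≤ lam * (|t| * M) := mul_le_mul_of_nonneg_left (by linarith [h2 ▸ h1]) hlam.le
  have hint_exp : ∀ t : ℝ, Integrable (fun ω => Real.exp (-lam * (t * ⟪astar, dX ω⟫))) P := by
    intro t
    refine bdd_int P (hmeas_exp t) (C := Real.exp (lam * (|t| * M))) (fun ω => ?_)
    rw [abs_of_pos (Real.exp_pos _)]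
    exact Real.exp_le_exp.2 (hkey t ω)
  have hexp_le : ∀ ω, Real.exp (-lam * ⟪astar, dX ω⟫) ≤ Real.exp (lam * M) := by
    intro ω
    have := hkey 1 ω
    simp only [one_mul, abs_one] at this
    exact Real.exp_le_exp.2 this
  have hint_Z : Integrable (fun ω => Real.exp (-lam * ⟪astar, dX ω⟫)) P := by
    have := hint_exp 1
    simpa only [one_mul] using this
  have hint_sexp :
      Integrable (fun ω => ⟪astar, dX ω⟫ * Real.exp (-lam * ⟪astar, dX ω⟫)) P := by
    refine bdd_int P (hs_meas.mul (by simpa only [one_mul] using hmeas_exp 1))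
      (C := M * Real.exp (lam * M)) (fun ω => ?_)
    rw [abs_mul, abs_of_pos (Real.exp_pos _)]
    exact mul_le_mul (hsM ω) (hexp_le ω) (Real.exp_pos _).le hM0
  -- minimality of `t = 1` for `ψ t = ∫ exp (-λ t s)`
  have hval : ∀ t : ℝ, ∫ ω, (1 - Real.exp (-lam * ⟪t • astar, dX ω⟫)) / lam ∂P =
      (1 - ∫ ω, Real.exp (-lam * (t * ⟪astar, dX ω⟫)) ∂P) / lam := by
    intro t
    have h1 : ∀ ω, ⟪t • astar, dX ω⟫ = t * ⟪astar, dX ω⟫ := fun ω =>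
      real_inner_smul_left _ _ _
    simp_rw [h1]
    rw [integral_div, integral_sub (integrable_const 1) (hint_exp t), integral_const]
    simp
  have hmin : ∀ t : ℝ, ∫ ω, Real.exp (-lam * (1 * ⟪astar, dX ω⟫)) ∂P ≤
      ∫ ω, Real.exp (-lam * (t * ⟪astar, dX ω⟫)) ∂P := by
    intro t
    have h := hmax (t • astar)
    simp only [hu] at h
    rw [hval t] at h
    have hone := hval 1
    simp only [one_smul] at hone
    rw [hone] at h
    rw [div_le_div_iff₀ hlam hlam] at h
    nlinarith [h, hlam]
  -- first-order condition
  have hFOC : ∫ ω, ⟪astar, dX ω⟫ * Real.exp (-lam * ⟪astar, dX ω⟫) ∂P = 0 :=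
    foc P lam hlam (fun ω => ⟪astar, dX ω⟫) hs_meas M hM0 hsM hmin
  -- properties of Z and w
  have hZpos : 0 < Z := by
    rw [hZ]
    have hge : ∀ ω, Real.exp (-lam * M) ≤ Real.exp (-lam * ⟪astar, dX ω⟫) := by
      intro ω
      refine Real.exp_le_exp.2 ?_
      have h1 := (hsM ω)
      nlinarith [mul_le_mul_of_nonneg_left (le_of_abs_le h1) hlam.le]
    calc (0 : ℝ) < Real.exp (-lam * M) := Real.exp_pos _
      _ = ∫ _ω, Real.exp (-lam * M) ∂P := by simp
      _ ≤ ∫ ω, Real.exp (-lam * ⟪astar, dX ω⟫) ∂P :=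
        integral_mono (integrable_const _) hint_Z hge
  have hw_pos : ∀ ω, 0 < w ω := by
    intro ω; rw [hw]; exact div_pos (Real.exp_pos _) hZpos
  have hlogw : ∀ ω, Real.log (w ω) = -lam * ⟪astar, dX ω⟫ - Real.log Z := by
    intro ω
    rw [hw]
    simp only
    rw [Real.log_div (Real.exp_ne_zero _) hZpos.ne', Real.log_exp]
  have hint_w : Integrable w P := by
    rw [hw]; exact hint_Z.div_const Z
  have hw_int1 : ∫ ω, w ω ∂P = 1 := by
    rw [hw]
    simp only
    rw [integral_div, ← hZ, div_self hZpos.ne']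
  -- ∫ w log w = - log Z
  have hwlogw : ∫ ω, w ω * Real.log (w ω) ∂P = -Real.log Z := by
    have hfun : ∀ ω, w ω * Real.log (w ω) =
        (-lam / Z) * (⟪astar, dX ω⟫ * Real.exp (-lam * ⟪astar, dX ω⟫)) +
        (-(Real.log Z) / Z) * Real.exp (-lam * ⟪astar, dX ω⟫) := by
      intro ω
      rw [hlogw ω, hw]
      simp only
      field_simp
      ring
    simp_rw [hfun]
    rw [integral_add (hint_sexp.const_mul _) (hint_Z.const_mul _),
      integral_const_mul, integral_const_mul, hFOC, ← hZ]
    field_simp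
    ring
  -- q' integrability facts
  have hq'_int : Integrable q' P := by
    by_contra h
    rw [integral_undef h] at hq'_int1
    exact one_ne_zero hq'_int1.symm
  have hint_q'dX : Integrable (fun ω => q' ω • dX ω) P := by
    refine Integrable.mono' (hq'_int.const_mul C)
      ((hq'_meas.smul hdX_meas).aestronglyMeasurable) (ae_of_all _ fun ω => ?_)
    rw [norm_smul, Real.norm_eq_abs, abs_of_pos (hq'_pos ω)]
    calc q' ω * ‖dX ω‖ ≤ q' ω * C := mul_le_mul_of_nonneg_left (hC ω) (hq'_pos ω).le
      _ = C * q' ω := mul_comm _ _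
  have hq's0 : ∫ ω, q' ω * ⟪astar, dX ω⟫ ∂P = 0 := by
    have h1 : ∀ ω, q' ω * ⟪astar, dX ω⟫ = ⟪astar, q' ω • dX ω⟫ := fun ω =>
      (real_inner_smul_right _ _ _).symm
    simp_rw [h1]
    rw [integral_inner hint_q'dX, hq'_mart, inner_zero_right]
  have hint_q's : Integrable (fun ω => q' ω * ⟪astar, dX ω⟫) P := by
    refine Integrable.mono' (hq'_int.const_mul M) ((hq'_meas.mul hs_meas).aestronglyMeasurable)
      (ae_of_all _ fun ω => ?_)
    rw [Real.norm_eq_abs, abs_mul, abs_of_pos (hq'_pos ω)]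
    calc q' ω * |⟪astar, dX ω⟫| ≤ q' ω * M := mul_le_mul_of_nonneg_left (hsM ω) (hq'_pos ω).le
      _ = M * q' ω := mul_comm _ _
  -- pointwise Gibbs inequality
  have hpt : ∀ ω, (-lam) * (q' ω * ⟪astar, dX ω⟫) + (-(Real.log Z)) * q' ω + (q' ω - w ω) ≤
      q' ω * Real.log (q' ω) := by
    intro ω
    have hq := hq'_pos ω
    have hwp := hw_pos ω
    have h1 : Real.log (w ω / q' ω) ≤ w ω / q' ω - 1 :=
      Real.log_le_sub_one_of_pos (div_pos hwp hq)
    rw [Real.log_div hwp.ne' hq.ne'] at h1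
    have h3 := mul_le_mul_of_nonneg_left h1 hq.le
    rw [hlogw ω] at h3
    have h4 : q' ω * (w ω / q' ω - 1) = w ω - q' ω := by field_simp
    rw [h4] at h3
    nlinarith [h3]
  -- integrate the Gibbs inequality
  have hint_LHS : Integrable (fun ω =>
      (-lam) * (q' ω * ⟪astar, dX ω⟫) + (-(Real.log Z)) * q' ω + (q' ω - w ω)) P :=
    ((hint_q's.const_mul _).add (hq'_int.const_mul _)).add (hq'_int.sub hint_w)
  have hineq := integral_mono hint_LHS hq'_ent hpt
  have hintA : Integrable (fun ω => (-lam) * (q' ω * ⟪astar, dX ω⟫)) P :=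
    hint_q's.const_mul (-lam)
  have hintB : Integrable (fun ω => (-(Real.log Z)) * q' ω) P :=
    hq'_int.const_mul (-(Real.log Z))
  have hintAB : Integrable
      (fun ω => (-lam) * (q' ω * ⟪astar, dX ω⟫) + (-(Real.log Z)) * q' ω) P :=
    hintA.add hintB
  have hintC : Integrable (fun ω => q' ω - w ω) P := hq'_int.sub hint_w
  have hLHS : ∫ ω, ((-lam) * (q' ω * ⟪astar, dX ω⟫) + (-(Real.log Z)) * q' ω + (q' ω - w ω)) ∂P
      = -Real.log Z := by
    rw [integral_add hintAB hintC, integral_add hintA hintB,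
      integral_const_mul, integral_const_mul, hq's0, hq'_int1,
      integral_sub hq'_int hint_w, hq'_int1, hw_int1]
    ring
  rw [hwlogw, ← hLHS]
  exact hineq
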